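/- Let V be a module over a commutative ring, c : V ⊗ V → V ⊗ V a linear isomorphism satisfying the braid equation (c⊗id)(id⊗c)(c⊗id) = (id⊗c)(c⊗id)(id⊗c), and φ₁, φ₂ : V → V invertible linear maps such that (φ₁⁻¹⊗φ₂⁻¹)c(φ₁⊗φ₂) = (φ₂⁻¹⊗φ₁⁻¹)c(φ₂⊗φ₁). Then c̃ := (φ₁⁻¹⊗φ₂⁻¹)c(φ₁⊗φ₂) also satisfies the braid equation. -/
import Mathlib


open TensorProduct

/-- The endomorphism `c ⊗ id` of `V ⊗ (V ⊗ V)`, acting on the first two factors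
(via the associator). -/
noncomputable def cFst {k V : Type*} [CommRing k] [AddCommGroup V] [Module k V]
    (c : V ⊗[k] V →ₗ[k] V ⊗[k] V) :
    V ⊗[k] (V ⊗[k] V) →ₗ[k] V ⊗[k] (V ⊗[k] V) :=
  (TensorProduct.assoc k V V V : (V ⊗[k] V) ⊗[k] V ≃ₗ[k] V ⊗[k] (V ⊗[k] V)).toLinearMap
    ∘ₗ TensorProduct.map c LinearMap.id
    ∘ₗ ((TensorProduct.assoc k V V V).symm :
        V ⊗[k] (V ⊗[k] V) ≃ₗ[k] (V ⊗[k] V) ⊗[k] V).toLinearMap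

/-- The endomorphism `id ⊗ c` of `V ⊗ (V ⊗ V)`, acting on the last two factors. -/
noncomputable def cSnd {k V : Type*} [CommRing k] [AddCommGroup V] [Module k V]
    (c : V ⊗[k] V →ₗ[k] V ⊗[k] V) :
    V ⊗[k] (V ⊗[k] V) →ₗ[k] V ⊗[k] (V ⊗[k] V) :=
  TensorProduct.map LinearMap.id c

/-- The braid equation for a linear endomorphism of `V ⊗ V`. -/
def IsBraiding {k V : Type*} [CommRing k] [AddCommGroup V] [Module k V]
    (c : V ⊗[k] V →ₗ[k] V ⊗[k] V) : Prop :=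
  cFst c ∘ₗ cSnd c ∘ₗ cFst c = cSnd c ∘ₗ cFst c ∘ₗ cSnd c

section Aux
variable {k V : Type*} [CommRing k] [AddCommGroup V] [Module k V]

/-- Abbreviation for the triple tensor map `a ⊗ b ⊗ d` on `V ⊗ (V ⊗ V)`. -/
noncomputable def M3 (a b d : V →ₗ[k] V) : V ⊗[k] (V ⊗[k] V) →ₗ[k] V ⊗[k] (V ⊗[k] V) :=
  TensorProduct.map a (TensorProduct.map b d)

lemma M3_comp (a b d a' b' d' : V →ₗ[k] V) :
    M3 a b d ∘ₗ M3 a' b' d' = M3 (a ∘ₗ a') (b ∘ₗ b') (d ∘ₗ d') := by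
  simp [M3, ← TensorProduct.map_comp]

lemma M3_comp' (a b d a' b' d' : V →ₗ[k] V)
    (X : V ⊗[k] (V ⊗[k] V) →ₗ[k] V ⊗[k] (V ⊗[k] V)) :
    M3 a b d ∘ₗ (M3 a' b' d' ∘ₗ X) = M3 (a ∘ₗ a') (b ∘ₗ b') (d ∘ₗ d') ∘ₗ X := by
  rw [← LinearMap.comp_assoc, M3_comp]

lemma M3_id : (M3 LinearMap.id LinearMap.id LinearMap.id : V ⊗[k] (V ⊗[k] V) →ₗ[k] _)
    = LinearMap.id := by
  simp [M3]

lemma nat_ab (a b d : V →ₗ[k] V) :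
    M3 a b d ∘ₗ (TensorProduct.assoc k V V V).toLinearMap
      = (TensorProduct.assoc k V V V).toLinearMap ∘ₗ
        TensorProduct.map (TensorProduct.map a b) d := by
  apply TensorProduct.ext_threefold
  intro x y z
  simp [M3]

lemma M3_eq (a b d : V →ₗ[k] V) :
    M3 a b d = (TensorProduct.assoc k V V V).conj
      (TensorProduct.map (TensorProduct.map a b) d) := by
  rw [LinearEquiv.conj_apply, ← nat_ab]
  ext x
  simp

lemma cFst_eq (c : V ⊗[k] V →ₗ[k] V ⊗[k] V) :
    cFst c = (TensorProduct.assoc k V V V).conj (TensorProduct.map c LinearMap.id) := by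
  simp [cFst, LinearEquiv.conj_apply, LinearMap.comp_assoc]

lemma cFst_conj (c : V ⊗[k] V →ₗ[k] V ⊗[k] V) (a b a' b' : V →ₗ[k] V) :
    cFst (TensorProduct.map a b ∘ₗ c ∘ₗ TensorProduct.map a' b')
      = M3 a b LinearMap.id ∘ₗ cFst c ∘ₗ M3 a' b' LinearMap.id := by
  have h : TensorProduct.map (TensorProduct.map a b ∘ₗ c ∘ₗ TensorProduct.map a' b')
        (LinearMap.id : V →ₗ[k] V)
      = TensorProduct.map (TensorProduct.map a b) LinearMap.id ∘ₗ
        TensorProduct.map c LinearMap.id ∘ₗ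
        TensorProduct.map (TensorProduct.map a' b') LinearMap.id := by
    simp [← TensorProduct.map_comp]
  rw [cFst_eq, cFst_eq, M3_eq, M3_eq, h, LinearEquiv.conj_comp, LinearEquiv.conj_comp]

lemma cSnd_conj (c : V ⊗[k] V →ₗ[k] V ⊗[k] V) (a b a' b' : V →ₗ[k] V) :
    cSnd (TensorProduct.map a b ∘ₗ c ∘ₗ TensorProduct.map a' b')
      = M3 LinearMap.id a b ∘ₗ cSnd c ∘ₗ M3 LinearMap.id a' b' := by
  simp [cSnd, M3, ← TensorProduct.map_comp]

lemma cSnd_comm (c : V ⊗[k] V →ₗ[k] V ⊗[k] V) (a : V →ₗ[k] V) :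
    cSnd c ∘ₗ M3 a LinearMap.id LinearMap.id = M3 a LinearMap.id LinearMap.id ∘ₗ cSnd c := by
  simp [cSnd, M3, ← TensorProduct.map_comp]

lemma cSnd_comm' (c : V ⊗[k] V →ₗ[k] V ⊗[k] V) (a : V →ₗ[k] V)
    (X : V ⊗[k] (V ⊗[k] V) →ₗ[k] V ⊗[k] (V ⊗[k] V)) :
    cSnd c ∘ₗ (M3 a LinearMap.id LinearMap.id ∘ₗ X)
      = M3 a LinearMap.id LinearMap.id ∘ₗ (cSnd c ∘ₗ X) := by
  rw [← LinearMap.comp_assoc, cSnd_comm, LinearMap.comp_assoc]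

lemma cFst_comm (c : V ⊗[k] V →ₗ[k] V ⊗[k] V) (d : V →ₗ[k] V) :
    cFst c ∘ₗ M3 LinearMap.id LinearMap.id d = M3 LinearMap.id LinearMap.id d ∘ₗ cFst c := by
  rw [cFst_eq, M3_eq, ← LinearEquiv.conj_comp, ← LinearEquiv.conj_comp]
  congr 1
  simp [← TensorProduct.map_comp]

lemma cFst_comm' (c : V ⊗[k] V →ₗ[k] V ⊗[k] V) (d : V →ₗ[k] V)
    (X : V ⊗[k] (V ⊗[k] V) →ₗ[k] V ⊗[k] (V ⊗[k] V)) :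
    cFst c ∘ₗ (M3 LinearMap.id LinearMap.id d ∘ₗ X)
      = M3 LinearMap.id LinearMap.id d ∘ₗ (cFst c ∘ₗ X) := by
  rw [← LinearMap.comp_assoc, cFst_comm, LinearMap.comp_assoc]

end Aux

section Braid
variable {k V : Type*} [CommRing k] [AddCommGroup V] [Module k V]

lemma braid_conj₁ (c : V ⊗[k] V →ₗ[k] V ⊗[k] V) (f g f' g' : V →ₗ[k] V)
    (hf : f ∘ₗ f' = LinearMap.id) (hg : g ∘ₗ g' = LinearMap.id) :
    (M3 f' g' LinearMap.id ∘ₗ cFst c ∘ₗ M3 f g LinearMap.id) ∘ₗ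
      (M3 LinearMap.id g' f' ∘ₗ cSnd c ∘ₗ M3 LinearMap.id g f) ∘ₗ
      (M3 f' g' LinearMap.id ∘ₗ cFst c ∘ₗ M3 f g LinearMap.id)
      = M3 f' g' f' ∘ₗ (cFst c ∘ₗ cSnd c ∘ₗ cFst c) ∘ₗ M3 f g f := by
  simp only [LinearMap.comp_assoc]
  rw [M3_comp' f g LinearMap.id LinearMap.id g' f',
      M3_comp' LinearMap.id g f f' g' LinearMap.id]
  simp only [hg, LinearMap.comp_id, LinearMap.id_comp]
  rw [show M3 f LinearMap.id f' = M3 LinearMap.id LinearMap.id f' ∘ₗ M3 f LinearMap.id LinearMap.id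
        from by rw [M3_comp]; simp,
      show M3 f' LinearMap.id f = M3 f' LinearMap.id LinearMap.id ∘ₗ M3 LinearMap.id LinearMap.id f
        from by rw [M3_comp]; simp]
  simp only [LinearMap.comp_assoc]
  rw [← cSnd_comm' c f]
  simp only [M3_comp', hf, LinearMap.comp_id, LinearMap.id_comp, M3_id]
  rw [show M3 LinearMap.id LinearMap.id f ∘ₗ (cFst c ∘ₗ M3 f g LinearMap.id)
        = cFst c ∘ₗ (M3 LinearMap.id LinearMap.id f ∘ₗ M3 f g LinearMap.id)
        from (cFst_comm' c f _).symm,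
      M3_comp]
  simp only [LinearMap.comp_id, LinearMap.id_comp]
  rw [cFst_comm' c f']
  rw [M3_comp' f' g' LinearMap.id LinearMap.id LinearMap.id f']
  simp only [LinearMap.comp_id, LinearMap.id_comp]

lemma braid_conj₂ (c : V ⊗[k] V →ₗ[k] V ⊗[k] V) (f g f' g' : V →ₗ[k] V)
    (hf : f ∘ₗ f' = LinearMap.id) (hg : g ∘ₗ g' = LinearMap.id) :
    (M3 LinearMap.id g' f' ∘ₗ cSnd c ∘ₗ M3 LinearMap.id g f) ∘ₗ
      (M3 f' g' LinearMap.id ∘ₗ cFst c ∘ₗ M3 f g LinearMap.id) ∘ₗ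
      (M3 LinearMap.id g' f' ∘ₗ cSnd c ∘ₗ M3 LinearMap.id g f)
      = M3 f' g' f' ∘ₗ (cSnd c ∘ₗ cFst c ∘ₗ cSnd c) ∘ₗ M3 f g f := by
  simp only [LinearMap.comp_assoc]
  rw [M3_comp' LinearMap.id g f f' g' LinearMap.id,
      M3_comp' f g LinearMap.id LinearMap.id g' f']
  simp only [hg, LinearMap.comp_id, LinearMap.id_comp]
  rw [show M3 f' LinearMap.id f = M3 f' LinearMap.id LinearMap.id ∘ₗ M3 LinearMap.id LinearMap.id f
        from by rw [M3_comp]; simp,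
      show M3 f LinearMap.id f' = M3 LinearMap.id LinearMap.id f' ∘ₗ M3 f LinearMap.id LinearMap.id
        from by rw [M3_comp]; simp]
  simp only [LinearMap.comp_assoc]
  rw [← cFst_comm' c f]
  simp only [M3_comp', hf, LinearMap.comp_id, LinearMap.id_comp, M3_id]
  rw [show M3 f LinearMap.id LinearMap.id ∘ₗ (cSnd c ∘ₗ M3 LinearMap.id g f)
        = cSnd c ∘ₗ (M3 f LinearMap.id LinearMap.id ∘ₗ M3 LinearMap.id g f)
        from (cSnd_comm' c f _).symm,
      M3_comp]
  simp only [LinearMap.comp_id, LinearMap.id_comp]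
  rw [cSnd_comm' c f']
  rw [M3_comp' LinearMap.id g' f' f' LinearMap.id LinearMap.id]
  simp only [LinearMap.comp_id, LinearMap.id_comp]

end Braid

theorem stmt19 {k V : Type*} [CommRing k] [AddCommGroup V] [Module k V]
    (c : V ⊗[k] V →ₗ[k] V ⊗[k] V) (hcbij : Function.Bijective c)
    (hc : IsBraiding c)
    (φ₁ φ₂ : V ≃ₗ[k] V)
    (hsym :
      TensorProduct.map (φ₁.symm : V →ₗ[k] V) (φ₂.symm : V →ₗ[k] V) ∘ₗ c ∘ₗ
          TensorProduct.map (φ₁ : V →ₗ[k] V) (φ₂ : V →ₗ[k] V)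
        = TensorProduct.map (φ₂.symm : V →ₗ[k] V) (φ₁.symm : V →ₗ[k] V) ∘ₗ c ∘ₗ
          TensorProduct.map (φ₂ : V →ₗ[k] V) (φ₁ : V →ₗ[k] V)) :
    IsBraiding (TensorProduct.map (φ₁.symm : V →ₗ[k] V) (φ₂.symm : V →ₗ[k] V) ∘ₗ c ∘ₗ
      TensorProduct.map (φ₁ : V →ₗ[k] V) (φ₂ : V →ₗ[k] V)) := by
  unfold IsBraiding at hc ⊢
  have hf : (φ₁ : V →ₗ[k] V) ∘ₗ (φ₁.symm : V →ₗ[k] V) = LinearMap.id := by ext x; simp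
  have hg : (φ₂ : V →ₗ[k] V) ∘ₗ (φ₂.symm : V →ₗ[k] V) = LinearMap.id := by ext x; simp
  have hFst := cFst_conj c (φ₁.symm : V →ₗ[k] V) (φ₂.symm : V →ₗ[k] V)
    (φ₁ : V →ₗ[k] V) (φ₂ : V →ₗ[k] V)
  have hSnd : cSnd (TensorProduct.map (φ₁.symm : V →ₗ[k] V) (φ₂.symm : V →ₗ[k] V) ∘ₗ c ∘ₗ
        TensorProduct.map (φ₁ : V →ₗ[k] V) (φ₂ : V →ₗ[k] V))
      = M3 LinearMap.id (φ₂.symm : V →ₗ[k] V) (φ₁.symm : V →ₗ[k] V) ∘ₗ cSnd c ∘ₗ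
        M3 LinearMap.id (φ₂ : V →ₗ[k] V) (φ₁ : V →ₗ[k] V) := by
    rw [hsym]; exact cSnd_conj c _ _ _ _
  rw [hFst, hSnd, braid_conj₁ c _ _ _ _ hf hg, braid_conj₂ c _ _ _ _ hf hg, hc]
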